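/- arXiv:1509.02877 — 4 statements merged into one kernel-verified Lean document; each statement's English description precedes it below -/
import Mathlib

section
/- Let A, F₁, …, F_m ∈ ℝ^{n×n}, B ∈ ℝ^{n×m}, and suppose W is a symmetric positive semidefinite matrix satisfying the generalized Lyapunov equation A W Aᵀ − W + Σ_{j=1}^m F_j W F_jᵀ + B Bᵀ = 0. Then for every vector v in the kernel of W one has Aᵀ v ∈ Ker(W), F_jᵀ v ∈ Ker(W) for all j, and Bᵀ v = 0. -/
open Matrix

/-- If the symmetric PSD matrix `W` solves the generalized Lyapunov equation
`A W Aᵀ − W + Σ_j F_j W F_jᵀ + B Bᵀ = 0`, then the kernel of `W` is invariant under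
`Aᵀ` and each `F_jᵀ`, and is annihilated by `Bᵀ`. -/
theorem stmt_1 {n m : ℕ}
    (A : Matrix (Fin n) (Fin n) ℝ) (F : Fin m → Matrix (Fin n) (Fin n) ℝ)
    (B : Matrix (Fin n) (Fin m) ℝ) (W : Matrix (Fin n) (Fin n) ℝ)
    (hW : W.PosSemidef)
    (hLyap : A * W * Aᵀ - W + (∑ j, F j * W * (F j)ᵀ) + B * Bᵀ = 0)
    (v : Fin n → ℝ) (hv : W.mulVec v = 0) :
    W.mulVec (Aᵀ.mulVec v) = 0 ∧ (∀ j, W.mulVec ((F j)ᵀ.mulVec v) = 0) ∧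
      Bᵀ.mulVec v = 0 := by
  -- quadratic form of the Lyapunov equation at v
  have key : v ⬝ᵥ (A * W * Aᵀ - W + (∑ j, F j * W * (F j)ᵀ) + B * Bᵀ).mulVec v = 0 := by
    rw [hLyap]; simp
  have hquad : ∀ (M N : Matrix (Fin n) (Fin n) ℝ),
      v ⬝ᵥ (M * N * Mᵀ).mulVec v = (Mᵀ.mulVec v) ⬝ᵥ N.mulVec (Mᵀ.mulVec v) := by
    intro M N
    rw [← mulVec_mulVec, ← mulVec_mulVec, dotProduct_mulVec, mulVec_transpose]
  have hB : v ⬝ᵥ (B * Bᵀ).mulVec v = (Bᵀ.mulVec v) ⬝ᵥ (Bᵀ.mulVec v) := by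
    rw [← mulVec_mulVec, dotProduct_mulVec, mulVec_transpose]
  have hA0 : 0 ≤ v ⬝ᵥ (A * W * Aᵀ).mulVec v := by
    rw [hquad]; exact hW.dotProduct_mulVec_nonneg _
  have hF0 : ∀ j, 0 ≤ v ⬝ᵥ (F j * W * (F j)ᵀ).mulVec v := fun j => by
    rw [hquad]; exact hW.dotProduct_mulVec_nonneg _
  have hB0 : 0 ≤ v ⬝ᵥ (B * Bᵀ).mulVec v := by
    rw [hB]; simpa using dotProduct_star_self_nonneg (Bᵀ.mulVec v)
  have hWv : v ⬝ᵥ W.mulVec v = 0 := by rw [hv]; simp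
  have key2 : v ⬝ᵥ (A * W * Aᵀ).mulVec v + (∑ j, v ⬝ᵥ (F j * W * (F j)ᵀ).mulVec v)
      + v ⬝ᵥ (B * Bᵀ).mulVec v = 0 := by
    have hsmv : (∑ j, F j * W * (F j)ᵀ).mulVec v = ∑ j, (F j * W * (F j)ᵀ).mulVec v := by
      ext i
      simp only [mulVec, dotProduct, Matrix.sum_apply, Finset.sum_apply, Finset.sum_mul]
      rw [Finset.sum_comm]
    have hds : v ⬝ᵥ (∑ j, (F j * W * (F j)ᵀ).mulVec v)
        = ∑ j, v ⬝ᵥ (F j * W * (F j)ᵀ).mulVec v := by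
      simp only [dotProduct, Finset.sum_apply, Finset.mul_sum]
      rw [Finset.sum_comm]
    have := key
    simp only [add_mulVec, sub_mulVec, dotProduct_add, dotProduct_sub, hWv, hsmv, hds] at this
    linarith [this]
  have hsum0 : 0 ≤ ∑ j, v ⬝ᵥ (F j * W * (F j)ᵀ).mulVec v :=
    Finset.sum_nonneg fun j _ => hF0 j
  have hAz : v ⬝ᵥ (A * W * Aᵀ).mulVec v = 0 := by linarith
  have hBz : v ⬝ᵥ (B * Bᵀ).mulVec v = 0 := by linarith
  have hFsum : ∑ j, v ⬝ᵥ (F j * W * (F j)ᵀ).mulVec v = 0 := by linarith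
  have hFz : ∀ j ∈ Finset.univ, v ⬝ᵥ (F j * W * (F j)ᵀ).mulVec v = 0 :=
    (Finset.sum_eq_zero_iff_of_nonneg fun j _ => hF0 j).mp hFsum
  refine ⟨?_, fun j => ?_, ?_⟩
  · have := hW.dotProduct_mulVec_zero_iff (Aᵀ.mulVec v)
    simp only [star_trivial] at this
    exact this.mp (by rw [← hquad]; exact hAz)
  · have := hW.dotProduct_mulVec_zero_iff ((F j)ᵀ.mulVec v)
    simp only [star_trivial] at this
    exact this.mp (by rw [← hquad]; exact hFz j (Finset.mem_univ j))
  · exact dotProduct_self_eq_zero.mp (by rw [← hB]; exact hBz)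
end

section
/- Let W be a symmetric positive semidefinite matrix satisfying the generalized Lyapunov equation A W Aᵀ − W + Σ_{j=1}^m F_j W F_jᵀ + B Bᵀ = 0. Then the image (column space) of W is invariant under the bilinear dynamics: if x ∈ Im(W) and u ∈ ℝ^m, then A x + Σ_{j=1}^m (F_j x + B_j) u_j ∈ Im(W), where B_j is the j-th column of B. -/
open Matrix

open scoped InnerProductSpace in
/-- For a real symmetric matrix, a vector orthogonal to the kernel is in the range. -/
lemma aux_mem_range_of_symm {n : ℕ} {W : Matrix (Fin n) (Fin n) ℝ} (hW : W.IsHermitian)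
    {v : Fin n → ℝ} (hv : ∀ z, W.mulVec z = 0 → z ⬝ᵥ v = 0) :
    v ∈ Set.range W.mulVec := by
  set T := Matrix.toEuclideanLin W with hTdef
  have hT : T.IsSymmetric := Matrix.isHermitian_iff_isSymmetric.mp hW
  have hker : (LinearMap.range T)ᗮ = LinearMap.ker T := by
    ext z
    rw [Submodule.mem_orthogonal, LinearMap.mem_ker]
    constructor
    · intro hz
      have h1 : ∀ y, ⟪y, T z⟫_ℝ = 0 := fun y => by
        rw [← hT y z]; exact hz _ ⟨y, rfl⟩
      exact inner_self_eq_zero.mp (h1 (T z))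
    · intro hz u hu
      obtain ⟨y, rfl⟩ := hu
      rw [hT y z, hz, inner_zero_right]
  have hrange : LinearMap.range T = (LinearMap.ker T)ᗮ := by
    rw [← hker, Submodule.orthogonal_orthogonal]
  have hv' : ((WithLp.equiv 2 (Fin n → ℝ)).symm v) ∈ LinearMap.range T := by
    rw [hrange, Submodule.mem_orthogonal]
    intro z hz
    rw [LinearMap.mem_ker] at hz
    have hz' : W.mulVec z = 0 := congrArg WithLp.ofLp hz
    have := hv z hz'
    simpa [PiLp.inner_apply, RCLike.inner_apply, dotProduct, mul_comm] using this
  obtain ⟨y, hy⟩ := hv'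
  exact ⟨y, congrArg WithLp.ofLp hy⟩


lemma aux_dot_sum {n m : ℕ} (z : Fin n → ℝ) (w : Fin m → Fin n → ℝ) :
    z ⬝ᵥ (∑ j, w j) = ∑ j, z ⬝ᵥ w j := by
  simp only [dotProduct, Finset.sum_apply, Finset.mul_sum]
  rw [Finset.sum_comm]

lemma aux_sum_mulVec {n m : ℕ} (M : Fin m → Matrix (Fin n) (Fin n) ℝ) (z : Fin n → ℝ) :
    (∑ j, M j) *ᵥ z = ∑ j, M j *ᵥ z := by
  ext i
  simp only [Matrix.mulVec, dotProduct, Finset.sum_apply, Matrix.sum_apply,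
    Finset.sum_mul]
  rw [Finset.sum_comm]

/-- If the symmetric PSD matrix `W` solves the generalized Lyapunov equation,
then the image (column space) of `W` is invariant under the bilinear dynamics
`x ↦ A x + Σ_j (F_j x + B_j) u_j`, where `B_j = Bᵀ j` is the `j`-th column of `B`. -/
theorem stmt_2 {n m : ℕ}
    (A : Matrix (Fin n) (Fin n) ℝ) (F : Fin m → Matrix (Fin n) (Fin n) ℝ)
    (B : Matrix (Fin n) (Fin m) ℝ) (W : Matrix (Fin n) (Fin n) ℝ)
    (hW : W.PosSemidef)
    (hLyap : A * W * Aᵀ - W + (∑ j, F j * W * (F j)ᵀ) + B * Bᵀ = 0)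
    (x : Fin n → ℝ) (hx : x ∈ Set.range W.mulVec) (u : Fin m → ℝ) :
    A.mulVec x + ∑ j, u j • ((F j).mulVec x + Bᵀ j) ∈ Set.range W.mulVec := by
  obtain ⟨y, rfl⟩ := hx
  have hWsym : Wᵀ = W := hW.1
  -- quadratic form identities
  have quad : ∀ (M : Matrix (Fin n) (Fin n) ℝ) (z : Fin n → ℝ),
      z ⬝ᵥ (M * W * Mᵀ) *ᵥ z = (Mᵀ *ᵥ z) ⬝ᵥ W *ᵥ (Mᵀ *ᵥ z) := by
    intro M z
    rw [← Matrix.mulVec_mulVec, ← Matrix.mulVec_mulVec, Matrix.dotProduct_mulVec z M,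
      ← Matrix.mulVec_transpose]
  apply aux_mem_range_of_symm hW.1
  intro z hz
  -- Extract kernel invariance facts from the Lyapunov equation
  have hsum : A * W * Aᵀ + (∑ j, F j * W * (F j)ᵀ) + B * Bᵀ = W := by
    have h : A * W * Aᵀ + (∑ j, F j * W * (F j)ᵀ) + B * Bᵀ - W = 0 := by
      rw [← hLyap]; abel
    exact sub_eq_zero.mp h
  have hq : z ⬝ᵥ (A * W * Aᵀ) *ᵥ z + z ⬝ᵥ (∑ j, F j * W * (F j)ᵀ) *ᵥ z
      + z ⬝ᵥ (B * Bᵀ) *ᵥ z = 0 := by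
    have : z ⬝ᵥ (A * W * Aᵀ + (∑ j, F j * W * (F j)ᵀ) + B * Bᵀ) *ᵥ z = z ⬝ᵥ W *ᵥ z := by
      rw [hsum]
    simpa [Matrix.add_mulVec, dotProduct_add, hz] using this
  have hPSD : ∀ (M : Matrix (Fin n) (Fin n) ℝ), 0 ≤ z ⬝ᵥ (M * W * Mᵀ) *ᵥ z := by
    intro M
    rw [quad M z]
    simpa using hW.dotProduct_mulVec_nonneg (Mᵀ *ᵥ z)
  have hsumq : z ⬝ᵥ (∑ j, F j * W * (F j)ᵀ) *ᵥ z
      = ∑ j, z ⬝ᵥ (F j * W * (F j)ᵀ) *ᵥ z := by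
    rw [aux_sum_mulVec, aux_dot_sum]
  have hq2nonneg : 0 ≤ z ⬝ᵥ (∑ j, F j * W * (F j)ᵀ) *ᵥ z := by
    rw [hsumq]; exact Finset.sum_nonneg fun j _ => hPSD (F j)
  have hq3 : z ⬝ᵥ (B * Bᵀ) *ᵥ z = (Bᵀ *ᵥ z) ⬝ᵥ (Bᵀ *ᵥ z) := by
    rw [← Matrix.mulVec_mulVec, Matrix.dotProduct_mulVec z B, ← Matrix.mulVec_transpose]
  have hq3nonneg : 0 ≤ z ⬝ᵥ (B * Bᵀ) *ᵥ z := by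
    rw [hq3]; exact Finset.sum_nonneg fun i _ => mul_self_nonneg _
  have hq1zero : z ⬝ᵥ (A * W * Aᵀ) *ᵥ z = 0 := le_antisymm (by linarith [hPSD A, hq2nonneg, hq3nonneg]) (hPSD A)
  have hq2zero : z ⬝ᵥ (∑ j, F j * W * (F j)ᵀ) *ᵥ z = 0 := by linarith [hPSD A, hq2nonneg, hq3nonneg]
  have hq3zero : z ⬝ᵥ (B * Bᵀ) *ᵥ z = 0 := by linarith [hPSD A, hq2nonneg, hq3nonneg]
  -- kernel facts
  have hA : W *ᵥ (Aᵀ *ᵥ z) = 0 := by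
    have := hq1zero
    rw [quad A z] at this
    exact (hW.dotProduct_mulVec_zero_iff (Aᵀ *ᵥ z)).mp (by simpa using this)
  have hF : ∀ j, W *ᵥ ((F j)ᵀ *ᵥ z) = 0 := by
    intro j
    have hj : z ⬝ᵥ (F j * W * (F j)ᵀ) *ᵥ z = 0 := by
      have h0 := hq2zero
      rw [hsumq] at h0
      have := (Finset.sum_eq_zero_iff_of_nonneg (fun j _ => hPSD (F j))).mp h0 j (Finset.mem_univ j)
      exact this
    rw [quad (F j) z] at hj
    exact (hW.dotProduct_mulVec_zero_iff ((F j)ᵀ *ᵥ z)).mp (by simpa using hj)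
  have hB : Bᵀ *ᵥ z = 0 := by
    have := hq3zero
    rw [hq3] at this
    exact dotProduct_self_eq_zero.mp this
  -- key dot product computation: z ⬝ᵥ M *ᵥ (W *ᵥ y) = 0 when W (Mᵀ z) = 0
  have key : ∀ (M : Matrix (Fin n) (Fin n) ℝ), W *ᵥ (Mᵀ *ᵥ z) = 0 →
      z ⬝ᵥ M *ᵥ (W *ᵥ y) = 0 := by
    intro M hM
    rw [Matrix.dotProduct_mulVec z M, ← Matrix.mulVec_transpose,
      Matrix.dotProduct_mulVec _ W, ← Matrix.mulVec_transpose, hWsym, hM,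
      zero_dotProduct]
  rw [dotProduct_add, aux_dot_sum, key A hA]
  have : ∀ j, z ⬝ᵥ u j • ((F j) *ᵥ (W *ᵥ y) + Bᵀ j) = 0 := by
    intro j
    rw [dotProduct_smul, dotProduct_add, key (F j) (hF j)]
    have hBj : z ⬝ᵥ Bᵀ j = 0 := by
      have : (Bᵀ *ᵥ z) j = 0 := by rw [hB]; rfl
      simpa [Matrix.mulVec, dotProduct, mul_comm] using this
    rw [hBj]
    simp
  rw [Finset.sum_congr rfl (fun j _ => this j)]
  simp
end

section
/- Consider a bilinear system with symmetric positive semidefinite Gramian W satisfying the generalized Lyapunov equation. If the state trajectory satisfies x(0) = 0 and x(k+1) = A x(k) + Σ_{j=1}^m (F_j x(k) + B_j) u_j(k) for all k, then x(k) ∈ Im(W) for every k ≥ 0. In particular, any state reachable from the origin lies in Im(W). -/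
open Matrix
open RealInnerProductSpace

/-- Dot product of a finite sum of vectors. -/
lemma sum_dotProduct' {n : ℕ} {ι : Type*} (s : Finset ι) (f : ι → Fin n → ℝ) (v : Fin n → ℝ) :
    (∑ j ∈ s, f j) ⬝ᵥ v = ∑ j ∈ s, f j ⬝ᵥ v := by
  simp only [dotProduct, Finset.sum_apply, Finset.sum_mul]
  exact Finset.sum_comm

/-- A finite sum of matrices applied to a vector. -/
lemma sum_mulVec' {n : ℕ} {ι : Type*} (s : Finset ι) (M : ι → Matrix (Fin n) (Fin n) ℝ)
    (v : Fin n → ℝ) : (∑ j ∈ s, M j).mulVec v = ∑ j ∈ s, (M j).mulVec v := by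
  classical
  induction s using Finset.induction with
  | empty => simp
  | insert _ _ h ih => rw [Finset.sum_insert h, Finset.sum_insert h, add_mulVec, ih]

/-- For a real symmetric matrix, a vector orthogonal to the kernel lies in the range. -/
lemma mem_range_of_symm {n : ℕ} (W : Matrix (Fin n) (Fin n) ℝ) (hsymm : Wᵀ = W)
    (x : Fin n → ℝ) (h : ∀ v, W.mulVec v = 0 → x ⬝ᵥ v = 0) :
    x ∈ Set.range W.mulVec := by
  let T : EuclideanSpace ℝ (Fin n) →ₗ[ℝ] EuclideanSpace ℝ (Fin n) := Matrix.toEuclideanLin W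
  have hinner : ∀ a b : EuclideanSpace ℝ (Fin n), ⟪a, b⟫ = dotProduct (α := ℝ) a b := by
    intro a b; simp [PiLp.inner_apply, dotProduct, RCLike.inner_apply, mul_comm]
  have hrange : LinearMap.range T = (LinearMap.ker T)ᗮ := by
    apply Submodule.eq_of_le_of_finrank_eq
    · rintro _ ⟨y, rfl⟩
      rw [Submodule.mem_orthogonal]
      intro v hv
      have hv0 : W.mulVec v = 0 := congrArg WithLp.ofLp hv
      rw [hinner]
      show dotProduct (α := ℝ) v (W.mulVec y) = 0
      rw [dotProduct_mulVec, ← mulVec_transpose, hsymm, hv0, zero_dotProduct]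
    · have h1 := Submodule.finrank_add_finrank_orthogonal (𝕜 := ℝ) (LinearMap.ker T)
      have h2 := LinearMap.finrank_range_add_finrank_ker T
      omega
  have hx : ∃ y : EuclideanSpace ℝ (Fin n), T y = x := by
    suffices hx' : ∀ z : EuclideanSpace ℝ (Fin n),
        (∀ v, W.mulVec v = 0 → dotProduct (α := ℝ) z v = 0) → z ∈ LinearMap.range T by
      obtain ⟨y, hy⟩ := hx' (WithLp.toLp 2 x) h
      exact ⟨y, by rw [hy]⟩
    intro z hz
    rw [hrange, Submodule.mem_orthogonal]
    intro v hv
    rw [hinner, dotProduct_comm]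
    exact hz v (congrArg WithLp.ofLp hv)
  obtain ⟨y, hy⟩ := hx
  exact ⟨y, hy⟩

/-- For a bilinear system whose symmetric PSD Gramian `W` satisfies the
generalized Lyapunov equation, every trajectory starting from the origin stays in the
image of `W`; in particular any state reachable from the origin lies in `Im(W)`. -/
theorem stmt_3 {n m : ℕ}
    (A : Matrix (Fin n) (Fin n) ℝ) (F : Fin m → Matrix (Fin n) (Fin n) ℝ)
    (B : Matrix (Fin n) (Fin m) ℝ) (W : Matrix (Fin n) (Fin n) ℝ)
    (hW : W.PosSemidef)
    (hLyap : A * W * Aᵀ - W + (∑ j, F j * W * (F j)ᵀ) + B * Bᵀ = 0)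
    (x : ℕ → Fin n → ℝ) (u : ℕ → Fin m → ℝ)
    (hx0 : x 0 = 0)
    (hdyn : ∀ k, x (k + 1) = A.mulVec (x k) + ∑ j, u k j • ((F j).mulVec (x k) + Bᵀ j)) :
    ∀ k, x k ∈ Set.range W.mulVec := by
  have hsymm : Wᵀ = W := hW.1
  have hker : ∀ v : Fin n → ℝ, W.mulVec v = 0 →
      W.mulVec (Aᵀ.mulVec v) = 0 ∧ (∀ j, W.mulVec ((F j)ᵀ.mulVec v) = 0) ∧ Bᵀ.mulVec v = 0 := by
    intro v hv
    have hpos : ∀ w : Fin n → ℝ, 0 ≤ w ⬝ᵥ W.mulVec w := by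
      intro w; simpa using hW.dotProduct_mulVec_nonneg w
    have hzero : ∀ w : Fin n → ℝ, w ⬝ᵥ W.mulVec w = 0 → W.mulVec w = 0 := by
      intro w hw
      exact (hW.dotProduct_mulVec_zero_iff w).mp (by simpa using hw)
    have key : v ⬝ᵥ (A * W * Aᵀ).mulVec v + (∑ j, v ⬝ᵥ (F j * W * (F j)ᵀ).mulVec v)
        + v ⬝ᵥ (B * Bᵀ).mulVec v = 0 := by
      have h0 := congrArg (fun M : Matrix (Fin n) (Fin n) ℝ => v ⬝ᵥ M.mulVec v) hLyap
      simp only [sub_eq_add_neg, add_mulVec, neg_mulVec, dotProduct_add, dotProduct_neg,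
        zero_mulVec, dotProduct_zero] at h0
      have hv' : v ⬝ᵥ W.mulVec v = 0 := by rw [hv, dotProduct_zero]
      have hsum : v ⬝ᵥ (∑ j, F j * W * (F j)ᵀ).mulVec v
          = ∑ j, v ⬝ᵥ (F j * W * (F j)ᵀ).mulVec v := by
        rw [sum_mulVec']
        simp only [dotProduct, Finset.sum_apply, Finset.mul_sum]
        exact Finset.sum_comm
      rw [hsum, hv'] at h0
      linarith
    have hqA : v ⬝ᵥ (A * W * Aᵀ).mulVec v = (Aᵀ.mulVec v) ⬝ᵥ W.mulVec (Aᵀ.mulVec v) := by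
      rw [← mulVec_mulVec, ← mulVec_mulVec, dotProduct_mulVec, ← mulVec_transpose]
    have hqF : ∀ j, v ⬝ᵥ (F j * W * (F j)ᵀ).mulVec v
        = ((F j)ᵀ.mulVec v) ⬝ᵥ W.mulVec ((F j)ᵀ.mulVec v) := by
      intro j
      rw [← mulVec_mulVec, ← mulVec_mulVec, dotProduct_mulVec, ← mulVec_transpose]
    have hqB : v ⬝ᵥ (B * Bᵀ).mulVec v = (Bᵀ.mulVec v) ⬝ᵥ (Bᵀ.mulVec v) := by
      rw [← mulVec_mulVec, dotProduct_mulVec, ← mulVec_transpose]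
    rw [hqA, hqB] at key
    have hsumF : ∀ j ∈ Finset.univ, (0:ℝ) ≤ v ⬝ᵥ (F j * W * (F j)ᵀ).mulVec v := by
      intro j _; rw [hqF j]; exact hpos _
    have hFnonneg : 0 ≤ ∑ j, v ⬝ᵥ (F j * W * (F j)ᵀ).mulVec v :=
      Finset.sum_nonneg hsumF
    have hAnonneg := hpos (Aᵀ.mulVec v)
    have hBnonneg : 0 ≤ (Bᵀ.mulVec v) ⬝ᵥ (Bᵀ.mulVec v) :=
      Finset.sum_nonneg fun i _ => mul_self_nonneg _
    have hA0 : (Aᵀ.mulVec v) ⬝ᵥ W.mulVec (Aᵀ.mulVec v) = 0 := by linarith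
    have hF0 : ∑ j, v ⬝ᵥ (F j * W * (F j)ᵀ).mulVec v = 0 := by linarith
    have hB0 : (Bᵀ.mulVec v) ⬝ᵥ (Bᵀ.mulVec v) = 0 := by linarith
    refine ⟨hzero _ hA0, ?_, ?_⟩
    · intro j
      have hj := (Finset.sum_eq_zero_iff_of_nonneg hsumF).mp hF0 j (Finset.mem_univ j)
      rw [hqF j] at hj
      exact hzero _ hj
    · exact dotProduct_self_eq_zero.mp hB0
  have hmain : ∀ k, ∀ v : Fin n → ℝ, W.mulVec v = 0 → x k ⬝ᵥ v = 0 := by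
    intro k
    induction k with
    | zero => intro v _; rw [hx0, zero_dotProduct]
    | succ k ih =>
      intro v hv
      obtain ⟨hA, hF, hB⟩ := hker v hv
      rw [hdyn k, add_dotProduct, sum_dotProduct']
      have h1 : A.mulVec (x k) ⬝ᵥ v = 0 := by
        rw [dotProduct_comm, dotProduct_mulVec, ← mulVec_transpose,
          dotProduct_comm (Aᵀ.mulVec v) (x k)]
        exact ih _ hA
      have h2 : ∀ j, (u k j • ((F j).mulVec (x k) + Bᵀ j)) ⬝ᵥ v = 0 := by
        intro j
        rw [smul_dotProduct, add_dotProduct]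
        have hFj : (F j).mulVec (x k) ⬝ᵥ v = 0 := by
          rw [dotProduct_comm, dotProduct_mulVec, ← mulVec_transpose,
            dotProduct_comm ((F j)ᵀ.mulVec v) (x k)]
          exact ih _ (hF j)
        have hBj : Bᵀ j ⬝ᵥ v = 0 := by
          have hc : Bᵀ.mulVec v j = 0 := by rw [hB]; rfl
          rw [← hc]; rfl
        rw [hFj, hBj, add_zero, smul_zero]
      rw [h1, zero_add, Finset.sum_eq_zero (fun j _ => h2 j)]
  intro k
  exact mem_range_of_symm W hsymm (x k) (hmain k)
end

section
/- Let V be a finite actuator set and suppose that for each S ⊆ V the bilinear reachability Gramian W(S) = Σ_{i=1}^∞ W_i(S) converges, where W₁(S) = Σ_{s∈S} W₁(s) and W_i(S) = Σ_{k=0}^∞ Aᵏ (Σ_{j∈S} F_j W_{i−1}(S) F_jᵀ) (Aᵀ)ᵏ for i ≥ 2. Then W is a supermodular matrix-valued set function with respect to the Loewner order: for all S₁ ⊆ S₂ ⊆ V and s ∈ V ∖ S₂, W(S₂ ∪ {s}) − W(S₂) ⪰ W(S₁ ∪ {s}) − W(S₁). -/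
open Matrix

private lemma tsum_psd {n : ℕ} (f : ℕ → Matrix (Fin n) (Fin n) ℝ) (hf : Summable f)
    (h : ∀ k, (f k).PosSemidef) : (∑' k, f k).PosSemidef := by
  rw [posSemidef_iff_dotProduct_mulVec]
  constructor
  · let φ : Matrix (Fin n) (Fin n) ℝ →ₗ[ℝ] Matrix (Fin n) (Fin n) ℝ :=
      { toFun := conjTranspose
        map_add' := by intro x y; exact conjTranspose_add x y
        map_smul' := by intro c x; simp [conjTranspose_smul] }
    have h1 := (LinearMap.toContinuousLinearMap φ).map_tsum hf
    simp only [LinearMap.coe_toContinuousLinearMap'] at h1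
    show (∑' k, f k)ᴴ = _
    rw [show (∑' k, f k)ᴴ = φ (∑' k, f k) from rfl, h1]
    exact tsum_congr fun k => (h k).1
  · intro x
    let φ : Matrix (Fin n) (Fin n) ℝ →ₗ[ℝ] ℝ :=
      { toFun := fun M => star x ⬝ᵥ (M *ᵥ x)
        map_add' := by intro M N; simp [add_mulVec, dotProduct_add]
        map_smul' := by intro c M; simp [smul_mulVec, dotProduct_smul] }
    have h1 := (LinearMap.toContinuousLinearMap φ).map_tsum hf
    simp only [LinearMap.coe_toContinuousLinearMap'] at h1
    show (0:ℝ) ≤ star x ⬝ᵥ ((∑' k, f k) *ᵥ x)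
    rw [show star x ⬝ᵥ ((∑' k, f k) *ᵥ x) = φ (∑' k, f k) from rfl, h1]
    refine tsum_nonneg fun k => ?_
    exact (h k).dotProduct_mulVec_nonneg x

private lemma psd_sum {n : ℕ} {ι : Type*} [DecidableEq ι] (s : Finset ι)
    (f : ι → Matrix (Fin n) (Fin n) ℝ)
    (h : ∀ j ∈ s, (f j).PosSemidef) : (∑ j ∈ s, f j).PosSemidef := by
  induction s using Finset.induction with
  | empty => simpa using Matrix.PosSemidef.zero
  | insert _ _ hj ih =>
    rw [Finset.sum_insert hj]
    exact (h _ (Finset.mem_insert_self _ _)).add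
      (ih fun j hjs => h j (Finset.mem_insert_of_mem hjs))

private lemma psd_congr {n : ℕ} {M : Matrix (Fin n) (Fin n) ℝ} (hM : M.PosSemidef)
    (B : Matrix (Fin n) (Fin n) ℝ) : (B * M * Bᵀ).PosSemidef := by
  have := hM.mul_mul_conjTranspose_same B
  rwa [conjTranspose_eq_transpose_of_trivial] at this

private lemma psd_sandwich {n : ℕ} {M : Matrix (Fin n) (Fin n) ℝ} (hM : M.PosSemidef)
    (A : Matrix (Fin n) (Fin n) ℝ) (k : ℕ) : (A ^ k * M * Aᵀ ^ k).PosSemidef := by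
  rw [← transpose_pow]
  exact psd_congr hM (A ^ k)

private lemma psd_vecMulVec {n : ℕ} (v : Fin n → ℝ) : (vecMulVec v v).PosSemidef := by
  rw [posSemidef_iff_dotProduct_mulVec]
  constructor
  · show _ = _
    rw [conjTranspose_eq_transpose_of_trivial]
    ext i j; simp [vecMulVec, mul_comm]
  · intro x
    have hmv : vecMulVec v v *ᵥ x = (v ⬝ᵥ x) • v := by
      ext i
      simp [vecMulVec, mulVec, dotProduct, Finset.mul_sum, Finset.sum_mul, mul_comm,
        mul_assoc, mul_left_comm]
    rw [hmv]
    simp only [dotProduct_smul, star_trivial]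
    rw [smul_eq_mul, dotProduct_comm]
    exact mul_self_nonneg _

/-- The bilinear reachability Gramian `W(S) = Σ_{i≥1} W_i(S)`, where
`W₁(S) = Σ_{s∈S} Σ_k Aᵏ b_s b_sᵀ (Aᵀ)ᵏ` and
`W_i(S) = Σ_k Aᵏ (Σ_{j∈S} F_j W_{i−1}(S) F_jᵀ) (Aᵀ)ᵏ` for `i ≥ 2`, is supermodular with
respect to the Loewner order: for `S₁ ⊆ S₂` and `s ∉ S₂`,
`W(S₂ ∪ {s}) − W(S₂) ⪰ W(S₁ ∪ {s}) − W(S₁)`. -/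
theorem stmt_11 {n : ℕ} {V : Type*} [Fintype V] [DecidableEq V]
    (A : Matrix (Fin n) (Fin n) ℝ)
    (hA : ∀ μ ∈ spectrum ℂ (A.map (algebraMap ℝ ℂ)), ‖μ‖ < 1)
    (F : V → Matrix (Fin n) (Fin n) ℝ) (b : V → Fin n → ℝ)
    (Wseq : ℕ → Finset V → Matrix (Fin n) (Fin n) ℝ)
    (hWseq1 : ∀ S, Wseq 1 S = ∑ s ∈ S, ∑' k : ℕ, A ^ k * vecMulVec (b s) (b s) * Aᵀ ^ k)
    (hWseqi : ∀ i, 2 ≤ i → ∀ S, Wseq i S =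
      ∑' k : ℕ, A ^ k * (∑ j ∈ S, F j * Wseq (i - 1) S * (F j)ᵀ) * Aᵀ ^ k)
    (hconv1 : ∀ S : Finset V, ∀ s ∈ S,
      Summable (fun k : ℕ => A ^ k * vecMulVec (b s) (b s) * Aᵀ ^ k))
    (hconvi : ∀ i : ℕ, ∀ S : Finset V,
      Summable (fun k : ℕ => A ^ k * (∑ j ∈ S, F j * Wseq i S * (F j)ᵀ) * Aᵀ ^ k))
    (hconv : ∀ S : Finset V, Summable (fun i : ℕ => Wseq (i + 1) S))
    (W : Finset V → Matrix (Fin n) (Fin n) ℝ)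
    (hW : ∀ S, W S = ∑' i : ℕ, Wseq (i + 1) S)
    (S1 S2 : Finset V) (s : V) (h12 : S1 ⊆ S2) (hs : s ∉ S2) :
    ((W (insert s S2) - W S2) - (W (insert s S1) - W S1)).PosSemidef := by
  -- the key threefold induction
  have key : ∀ i : ℕ, (∀ S : Finset V, (Wseq (i+1) S).PosSemidef) ∧
      (∀ T₁ T₂ : Finset V, T₁ ⊆ T₂ → (Wseq (i+1) T₂ - Wseq (i+1) T₁).PosSemidef) ∧
      (∀ (T₁ T₂ : Finset V) (t : V), T₁ ⊆ T₂ → t ∉ T₂ →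
        ((Wseq (i+1) (insert t T₂) - Wseq (i+1) T₂) -
          (Wseq (i+1) (insert t T₁) - Wseq (i+1) T₁)).PosSemidef) := by
    intro i
    induction i with
    | zero =>
      refine ⟨?_, ?_, ?_⟩
      · intro S
        rw [hWseq1]
        refine psd_sum _ _ fun t ht => ?_
        exact tsum_psd _ (hconv1 S t ht) fun k => psd_sandwich (psd_vecMulVec (b t)) A k
      · intro T₁ T₂ hT
        rw [hWseq1, hWseq1, ← Finset.sum_sdiff hT, add_sub_cancel_right]
        refine psd_sum _ _ fun t ht => ?_
        exact tsum_psd _ (hconv1 T₂ t (Finset.mem_sdiff.mp ht).1)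
          fun k => psd_sandwich (psd_vecMulVec (b t)) A k
      · intro T₁ T₂ t hT ht
        have ht1 : t ∉ T₁ := fun h => ht (hT h)
        have hz : (Wseq 1 (insert t T₂) - Wseq 1 T₂) - (Wseq 1 (insert t T₁) - Wseq 1 T₁)
            = 0 := by
          rw [hWseq1, hWseq1, hWseq1, hWseq1, Finset.sum_insert ht, Finset.sum_insert ht1]
          abel
        rw [hz]
        exact Matrix.PosSemidef.zero
    | succ i ih =>
      obtain ⟨ihP, ihM, ihS⟩ := ih
      have hrw : ∀ T : Finset V, Wseq (i+1+1) T =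
          ∑' k : ℕ, A ^ k * (∑ j ∈ T, F j * Wseq (i+1) T * (F j)ᵀ) * Aᵀ ^ k := by
        intro T
        exact hWseqi (i+2) (by omega) T
      refine ⟨?_, ?_, ?_⟩
      · intro S
        rw [hrw S]
        refine tsum_psd _ (hconvi (i+1) S) fun k => psd_sandwich ?_ A k
        exact psd_sum _ _ fun j _ => psd_congr (ihP S) (F j)
      · intro T₁ T₂ hT
        rw [hrw T₂, hrw T₁, ← Summable.tsum_sub (hconvi (i+1) T₂) (hconvi (i+1) T₁)]
        refine tsum_psd _ ((hconvi (i+1) T₂).sub (hconvi (i+1) T₁)) fun k => ?_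
        have heq : A ^ k * (∑ j ∈ T₂, F j * Wseq (i+1) T₂ * (F j)ᵀ) * Aᵀ ^ k -
            A ^ k * (∑ j ∈ T₁, F j * Wseq (i+1) T₁ * (F j)ᵀ) * Aᵀ ^ k =
            A ^ k * ((∑ j ∈ T₁, F j * (Wseq (i+1) T₂ - Wseq (i+1) T₁) * (F j)ᵀ) +
              ∑ j ∈ T₂ \ T₁, F j * Wseq (i+1) T₂ * (F j)ᵀ) * Aᵀ ^ k := by
          simp only [← Finset.sum_sdiff hT (f := fun j => F j * Wseq (i+1) T₂ * (F j)ᵀ),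
            mul_sub, sub_mul, mul_add, add_mul, Finset.sum_sub_distrib]
          abel
        rw [heq]
        refine psd_sandwich ?_ A k
        refine Matrix.PosSemidef.add ?_ ?_
        · exact psd_sum _ _ fun j _ => psd_congr (ihM T₁ T₂ hT) (F j)
        · exact psd_sum _ _ fun j _ => psd_congr (ihP T₂) (F j)
      · intro T₁ T₂ t hT ht
        have ht1 : t ∉ T₁ := fun h => ht (hT h)
        have hT' : insert t T₁ ⊆ insert t T₂ := Finset.insert_subset_insert t hT
        rw [hrw (insert t T₂), hrw T₂, hrw (insert t T₁), hrw T₁,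
          ← Summable.tsum_sub (hconvi (i+1) (insert t T₂)) (hconvi (i+1) T₂),
          ← Summable.tsum_sub (hconvi (i+1) (insert t T₁)) (hconvi (i+1) T₁),
          ← Summable.tsum_sub ((hconvi (i+1) (insert t T₂)).sub (hconvi (i+1) T₂))
            ((hconvi (i+1) (insert t T₁)).sub (hconvi (i+1) T₁))]
        refine tsum_psd _ (((hconvi (i+1) (insert t T₂)).sub (hconvi (i+1) T₂)).sub
          ((hconvi (i+1) (insert t T₁)).sub (hconvi (i+1) T₁))) fun k => ?_
        have heq : (A ^ k * (∑ j ∈ insert t T₂, F j * Wseq (i+1) (insert t T₂) * (F j)ᵀ) * Aᵀ ^ k -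
            A ^ k * (∑ j ∈ T₂, F j * Wseq (i+1) T₂ * (F j)ᵀ) * Aᵀ ^ k) -
            (A ^ k * (∑ j ∈ insert t T₁, F j * Wseq (i+1) (insert t T₁) * (F j)ᵀ) * Aᵀ ^ k -
            A ^ k * (∑ j ∈ T₁, F j * Wseq (i+1) T₁ * (F j)ᵀ) * Aᵀ ^ k) =
            A ^ k * (F t * (Wseq (i+1) (insert t T₂) - Wseq (i+1) (insert t T₁)) * (F t)ᵀ +
              (∑ j ∈ T₁, F j * ((Wseq (i+1) (insert t T₂) - Wseq (i+1) T₂) -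
                (Wseq (i+1) (insert t T₁) - Wseq (i+1) T₁)) * (F j)ᵀ) +
              ∑ j ∈ T₂ \ T₁, F j * (Wseq (i+1) (insert t T₂) - Wseq (i+1) T₂) * (F j)ᵀ) *
              Aᵀ ^ k := by
          simp only [Finset.sum_insert ht, Finset.sum_insert ht1,
            ← Finset.sum_sdiff hT (f := fun j => F j * Wseq (i+1) (insert t T₂) * (F j)ᵀ),
            ← Finset.sum_sdiff hT (f := fun j => F j * Wseq (i+1) T₂ * (F j)ᵀ),
            mul_sub, sub_mul, mul_add, add_mul, Finset.sum_sub_distrib, Finset.sum_add_distrib]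
          abel
        rw [heq]
        refine psd_sandwich ?_ A k
        refine Matrix.PosSemidef.add (Matrix.PosSemidef.add ?_ ?_) ?_
        · exact psd_congr (ihM (insert t T₁) (insert t T₂) hT') (F t)
        · exact psd_sum _ _ fun j _ => psd_congr (ihS T₁ T₂ t hT ht) (F j)
        · exact psd_sum _ _ fun j _ =>
            psd_congr (ihM T₂ (insert t T₂) (Finset.subset_insert t T₂)) (F j)
  rw [hW, hW, hW, hW, ← Summable.tsum_sub (hconv (insert s S2)) (hconv S2),
    ← Summable.tsum_sub (hconv (insert s S1)) (hconv S1),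
    ← Summable.tsum_sub ((hconv (insert s S2)).sub (hconv S2)) ((hconv (insert s S1)).sub (hconv S1))]
  refine tsum_psd _ (((hconv (insert s S2)).sub (hconv S2)).sub
    ((hconv (insert s S1)).sub (hconv S1))) fun i => ?_
  exact (key i).2.2 S1 S2 s h12 hs
end
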